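/- If a transposition σ and a 3-cycle τ together generate the symmetric group S₄, then their product στ is a 4-cycle. -/

import Mathlib

lemma aux_fourcycle : ∀ g : Equiv.Perm (Fin 4), Equiv.Perm.sign g = -1 → g.support.card = 4 →
    ∃ x, g x ≠ x ∧ ∀ y, g y ≠ y → g.SameCycle x y := by decide

/-- If a transposition `σ` and a 3-cycle `τ` generate `S₄`, then `στ` is a 4-cycle. -/
theorem swap_mul_threeCycle_isFourCycle (σ τ : Equiv.Perm (Fin 4))
    (hσ : σ.IsSwap) (hτ : τ.IsThreeCycle) (hgen : Subgroup.closure {σ, τ} = ⊤) :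
    (σ * τ).IsCycle ∧ (σ * τ).support.card = 4 := by
  classical
  have hτ3 : τ.support.card = 3 := hτ.card_support
  have hcompl : τ.supportᶜ.card = 1 := by
    simp [Finset.card_compl, hτ3]
  obtain ⟨p, hp⟩ := Finset.card_eq_one.mp hcompl
  have hpτ : p ∉ τ.support := by
    have : p ∈ τ.supportᶜ := by rw [hp]; exact Finset.mem_singleton_self p
    simpa using this
  have hτp : τ p = p := Equiv.Perm.notMem_support.mp hpτ
  by_cases hσp : σ p = p
  · -- then every element of the closure fixes p, contradiction
    exfalso
    have hfix : ∀ g ∈ Subgroup.closure ({σ, τ} : Set (Equiv.Perm (Fin 4))), g p = p := by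
      intro g hg
      induction hg using Subgroup.closure_induction with
      | mem x hx =>
        rcases hx with h | h
        · rw [h]; exact hσp
        · rw [h]; exact hτp
      | one => rfl
      | mul x y _ _ hx hy => simp [Equiv.Perm.mul_apply, hy, hx]
      | inv x _ hx => exact (Equiv.injective x) (by rw [← Equiv.Perm.mul_apply, mul_inv_cancel, Equiv.Perm.one_apply, hx])
    obtain ⟨q, hq⟩ : ∃ q : Fin 4, q ≠ p := by
      by_cases h0 : p = 0
      · exact ⟨1, by simp [h0]⟩
      · exact ⟨0, fun h => h0 h.symm⟩
    have hmem : Equiv.swap p q ∈ Subgroup.closure ({σ, τ} : Set (Equiv.Perm (Fin 4))) := by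
      rw [hgen]; trivial
    have := hfix _ hmem
    rw [Equiv.swap_apply_left] at this
    exact hq this
  · -- σ moves p; show σ*τ has full support and odd sign
    set q := σ p with hq
    have hqp : q ≠ p := hσp
    have hσσ : σ * σ = 1 := by
      obtain ⟨x, y, hxy, rfl⟩ := hσ
      exact Equiv.swap_mul_self x y
    have hσq : σ q = p := by
      have := congrArg (fun f => f p) hσσ
      simpa [Equiv.Perm.mul_apply] using this
    have hsupσ : σ.support = {p, q} := by
      have hcard : σ.support.card = 2 := Equiv.Perm.card_support_eq_two.mpr hσ
      have hsub : ({p, q} : Finset (Fin 4)) ⊆ σ.support := by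
        intro a ha
        rcases Finset.mem_insert.mp ha with rfl | ha
        · exact Equiv.Perm.mem_support.mpr hσp
        · rw [Finset.mem_singleton] at ha; subst ha
          exact Equiv.Perm.mem_support.mpr (by rw [hσq]; exact fun h => hqp h.symm)
      refine (Finset.eq_of_subset_of_card_le hsub ?_).symm
      rw [hcard, Finset.card_insert_of_notMem (by simp [hqp.symm]), Finset.card_singleton]
    have hσfix : ∀ a : Fin 4, a ≠ p → a ≠ q → σ a = a := by
      intro a h1 h2
      have : a ∉ σ.support := by rw [hsupσ]; simp [h1, h2]
      exact Equiv.Perm.notMem_support.mp this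
    have hτsupport : τ.support = {p}ᶜ := by
      have : τ.supportᶜ = {p} := hp
      rw [← compl_compl τ.support, this]
    have hτq : q ∈ τ.support := by rw [hτsupport]; simp [hqp]
    -- full support
    have hsupp : (σ * τ).support = Finset.univ := by
      ext a
      simp only [Finset.mem_univ, iff_true, Equiv.Perm.mem_support, Equiv.Perm.mul_apply]
      intro hcontra
      by_cases hap : a = p
      · subst hap
        rw [hτp] at hcontra
        exact hσp hcontra
      · have haτ : a ∈ τ.support := by rw [hτsupport]; simp [hap]
        have hτa : τ a ≠ a := Equiv.Perm.mem_support.mp haτ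
        have hτap : τ a ≠ p := by
          intro h
          have : τ a ∈ τ.support := Equiv.Perm.apply_mem_support.mpr haτ
          rw [h] at this; exact hpτ this
        by_cases haq : a = q
        · subst haq
          -- σ (τ q) = q means τ q = σ q = p, contradiction
          have : τ q = σ q := by
            have := congrArg σ hcontra
            rwa [← Equiv.Perm.mul_apply, hσσ, Equiv.Perm.one_apply] at this
          rw [hσq] at this
          exact hτap this
        · have hτaq : τ a ≠ q := by
            intro h
            rw [h, hσq] at hcontra
            exact hap hcontra.symm
          rw [hσfix _ hτap hτaq] at hcontra
          exact hτa hcontra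
    have hcard : (σ * τ).support.card = 4 := by
      rw [hsupp]; simp
    have hsign : Equiv.Perm.sign (σ * τ) = -1 := by
      rw [map_mul, hσ.sign_eq, hτ.sign]; norm_num
    exact ⟨aux_fourcycle _ hsign hcard, hcard⟩
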